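/- Let A be an admissible linear chain, n a positive integer, and B the admissible chain with e(B) = 1 − e(Aᵀ), i.e. B = A*. Then TWₙ ∗ B is admissible and e(TWₙ ∗ B) = 1 − e((A ++ [n+1])ᵀ). (That is, [A, n+1]* = TWₙ ∗ A*.) -/

import Mathlib

/-- The tridiagonal matrix associated to a linear chain `A = [a₁,…,a_r]`:
diagonal entries `aᵢ`, entries `-1` immediately above/below the diagonal, `0` elsewhere. -/
def chainMatrix (A : List ℤ) : Matrix (Fin A.length) (Fin A.length) ℤ :=
  fun i j =>
    if i = j then A.get i
    else if (i : ℕ) + 1 = (j : ℕ) ∨ (j : ℕ) + 1 = (i : ℕ) then -1 else 0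

/-- The discriminant `d(A)` of a linear chain: the determinant of `chainMatrix A`
(the `0 × 0` determinant being `1` for the empty list). -/
def disc (A : List ℤ) : ℤ := (chainMatrix A).det

/-- A linear chain is admissible if it is nonempty and all of its entries are `≥ 2`. -/
def Admissible (A : List ℤ) : Prop := A ≠ [] ∧ ∀ a ∈ A, 2 ≤ a

/-- The inductance `e(A) = d(A̅)/d(A)` of a linear chain, as a rational number. -/
def inductance (A : List ℤ) : ℚ := (disc A.tail : ℚ) / (disc A : ℚ)

/-- `TW n`: the list consisting of `n` copies of the integer `2`. -/
def TW (n : ℕ) : List ℤ := List.replicate n 2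

/-- The `∗`-product of two (nonempty) integer lists:
`[a₁,…,a_r] ∗ [b₁,…,b_s] = [a₁,…,a_{r−1}, a_r + b₁ − 1, b₂,…,b_s]`. -/
def sprod (A B : List ℤ) : List ℤ :=
  A.dropLast ++ (A.getLast! + B.head! - 1) :: B.tail

/-- Lemma 2.3 (i): for an admissible linear chain `A` and a positive integer `n`,
`[A, n+1]* = TWₙ ∗ A*`; i.e. if `B = A*` then `TWₙ ∗ B` is admissible and is the
adjoint of `A ++ [n+1]`. -/
lemma disc_nil : disc [] = 1 := by
  simp [disc, Matrix.det_fin_zero]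

lemma disc_singleton (a : ℤ) : disc [a] = a := by
  simp [disc, Matrix.det_fin_one, chainMatrix]

lemma chainMatrix_cons_succ (a : ℤ) (A : List ℤ) (i j : Fin A.length) :
    chainMatrix (a :: A) i.succ j.succ = chainMatrix A i j := by
  simp only [chainMatrix, Fin.succ_inj, List.get_cons_succ, Fin.val_succ]
  by_cases h : i = j
  · simp [h]
  · simp [h]

lemma disc_cons_cons (a b : ℤ) (C : List ℤ) :
    disc (a :: b :: C) = a * disc (b :: C) - disc C := by
  suffices h : ∀ (M : Matrix (Fin (C.length + 2)) (Fin (C.length + 2)) ℤ),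
      (∀ i j, M i j = chainMatrix (a :: b :: C) i j) →
      M.det = a * disc (b :: C) - disc C by
    exact h (chainMatrix (a :: b :: C)) (fun i j => rfl)
  intro M hM
  rw [Matrix.det_succ_column_zero, Fin.sum_univ_succ, Fin.sum_univ_succ]
  -- kill the tail sum
  have hz : ∀ i : Fin C.length, M i.succ.succ 0 = 0 := by
    intro i
    rw [hM]
    have h1 : ¬ ((i.succ.succ : Fin (C.length + 2)) = 0) := Fin.succ_ne_zero _
    simp only [chainMatrix, if_neg h1, Fin.val_succ, Fin.val_zero]
    exact if_neg (by omega)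
  have hsum0 : (∑ i : Fin C.length, (-1 : ℤ) ^ ((i.succ.succ : Fin (C.length+2)) : ℕ) *
      M i.succ.succ 0 * (M.submatrix (Fin.succAbove i.succ.succ) Fin.succ).det) = 0 :=
    Finset.sum_eq_zero fun i _ => by rw [hz i]; ring
  rw [hsum0, add_zero]
  have hM00 : M 0 0 = a := by rw [hM]; simp [chainMatrix]
  have hM10 : M 1 0 = -1 := by
    rw [hM]; simp [chainMatrix, Fin.ext_iff]
  -- first submatrix is chainMatrix (b :: C)
  have hsub0 : M.submatrix (Fin.succAbove 0) Fin.succ = chainMatrix (b :: C) := by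
    ext i j
    rw [Fin.succAbove_zero, Matrix.submatrix_apply, hM]
    exact chainMatrix_cons_succ a (b :: C) i j
  -- second term: N
  set N := M.submatrix (Fin.succAbove 1) Fin.succ with hN
  have hNdet : N.det = - disc C := by
    rw [Matrix.det_succ_row_zero, Fin.sum_univ_succ]
    have hN00 : N 0 0 = -1 := by
      rw [hN, Matrix.submatrix_apply, hM]
      have : (Fin.succAbove 1 (0 : Fin (C.length+1))) = (0 : Fin (C.length + 2)) := by
        simp [Fin.succAbove, Fin.lt_iff_val_lt_val]
      rw [this]
      simp [chainMatrix, Fin.ext_iff]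
    have hz2 : ∀ j : Fin C.length, N 0 j.succ = 0 := by
      intro j
      rw [hN, Matrix.submatrix_apply, hM]
      have h0 : (Fin.succAbove 1 (0 : Fin (C.length+1))) = (0 : Fin (C.length + 2)) := by
        simp [Fin.succAbove, Fin.lt_iff_val_lt_val]
      rw [h0]
      simp only [chainMatrix, Fin.val_succ, Fin.val_zero]
      rw [if_neg (by simp [Fin.ext_iff])]
      exact if_neg (by omega)
    have hsum2 : (∑ j : Fin C.length, (-1 : ℤ) ^ ((j.succ : Fin (C.length+1)) : ℕ) *
        N 0 j.succ * (N.submatrix Fin.succ (Fin.succAbove j.succ)).det) = 0 :=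
      Finset.sum_eq_zero fun j _ => by rw [hz2 j]; ring
    rw [hsum2, add_zero, hN00]
    have hsub2 : N.submatrix Fin.succ (Fin.succAbove 0) = chainMatrix C := by
      ext i j
      rw [Fin.succAbove_zero, Matrix.submatrix_apply, hN, Matrix.submatrix_apply, hM]
      have h1 : (Fin.succAbove 1 (i.succ : Fin (C.length+1))) = i.succ.succ := by
        simp [Fin.succAbove, Fin.lt_iff_val_lt_val]
      rw [h1]
      rw [show (chainMatrix (a :: b :: C) i.succ.succ j.succ.succ) =
        chainMatrix (b :: C) i.succ j.succ from chainMatrix_cons_succ a (b :: C) i.succ j.succ]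
      exact chainMatrix_cons_succ b C i j
    rw [hsub2]
    simp [disc]
  rw [show (Fin.succ (0 : Fin (C.length+1))) = (1 : Fin (C.length+2)) from rfl]
  rw [hM00, hM10, hsub0, hNdet]
  simp [disc]
  ring

lemma disc_reverse (A : List ℤ) : disc A.reverse = disc A := by
  have hlen : A.reverse.length = A.length := List.length_reverse
  let e : Fin A.reverse.length ≃ Fin A.length := (finCongr hlen).trans (Fin.revPerm)
  have hmat : chainMatrix A.reverse = (chainMatrix A).submatrix e e := by
    ext i j
    simp only [Matrix.submatrix_apply, chainMatrix]
    have hi : ((e i : Fin A.length) : ℕ) = A.length - 1 - (i : ℕ) := by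
      simp [e, Fin.rev, finCongr]
      omega
    have hj : ((e j : Fin A.length) : ℕ) = A.length - 1 - (j : ℕ) := by
      simp [e, Fin.rev, finCongr]
      omega
    have hij : i = j ↔ e i = e j := by
      constructor
      · rintro rfl; rfl
      · intro h; exact e.injective h
    have hget : A.reverse.get i = A.get (e i) := by
      rw [List.get_eq_getElem, List.get_eq_getElem, List.getElem_reverse]
      congr 1
      omega
    by_cases h : i = j
    · rw [if_pos h, if_pos (hij.mp h), hget, h]
    · rw [if_neg h, if_neg (fun hc => h (hij.mpr hc))]
      have hi' : (i : ℕ) < A.length := by omega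
      have hj' : (j : ℕ) < A.length := by omega
      congr 1
      simp only [eq_iff_iff, hi, hj]
      omega
  rw [disc, hmat, Matrix.det_submatrix_equiv_self, disc]

lemma disc_tail_lt (A : List ℤ) (hA : Admissible A) :
    1 ≤ disc A.tail ∧ disc A.tail < disc A := by
  obtain ⟨hne, h2⟩ := hA
  induction A with
  | nil => exact absurd rfl hne
  | cons a A ih =>
    match A with
    | [] =>
      simp only [List.tail_cons, disc_nil, disc_singleton]
      exact ⟨le_refl 1, by have := h2 a (by simp); omega⟩
    | b :: C =>
      have ha : 2 ≤ a := h2 a (by simp)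
      obtain ⟨h1, h2'⟩ := ih (by simp) (fun x hx => h2 x (by simp [hx]))
      simp only [List.tail_cons] at h1 h2' ⊢
      rw [disc_cons_cons]
      constructor
      · omega
      · nlinarith

lemma disc_TW_append (b : ℤ) (B' : List ℤ) (k : ℕ) :
    disc (TW k ++ (b + 1) :: B') = (k + 1) * disc (b :: B') + disc B' ∧
    disc ((TW k ++ (b + 1) :: B').tail) = k * disc (b :: B') + disc B' := by
  induction k with
  | zero =>
    simp only [TW, List.replicate_zero, List.nil_append, List.tail_cons]
    constructor
    · match B' with
      | [] => rw [disc_singleton, disc_singleton, disc_nil]; ring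
      | c :: C => rw [disc_cons_cons, disc_cons_cons]; ring
    · push_cast; ring
  | succ k ih =>
    have hTW : TW (k + 1) ++ (b + 1) :: B' = 2 :: (TW k ++ (b + 1) :: B') := by
      simp [TW, List.replicate_succ]
    obtain ⟨ih1, ih2⟩ := ih
    rcases hL : TW k ++ ((b + 1) :: B') with _ | ⟨y, Y⟩
    · exact absurd hL (by simp)
    · rw [hL] at ih1 ih2
      constructor
      · rw [hTW, hL, disc_cons_cons, ih1]
        simp only [List.tail_cons] at ih2
        rw [ih2]; push_cast; ring
      · rw [hTW, hL, List.tail_cons, ih1]; push_cast; ring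

lemma disc_concat (A : List ℤ) (hA : A ≠ []) (c : ℤ) :
    disc (A ++ [c]) = c * disc A - disc A.dropLast := by
  rw [← disc_reverse (A ++ [c]), List.reverse_append, List.reverse_singleton,
    List.singleton_append]
  rcases hR : A.reverse with _ | ⟨y, Y⟩
  · exact absurd (List.reverse_eq_nil_iff.mp hR) hA
  · rw [disc_cons_cons, ← hR, disc_reverse]
    have hY : Y = A.dropLast.reverse := by
      rw [← List.tail_reverse, hR, List.tail_cons]
    rw [hY, disc_reverse]

theorem adjoint_append (A B : List ℤ) (hA : Admissible A) (hB : Admissible B)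
    (hAB : inductance B = 1 - inductance A.reverse) (n : ℕ) (hn : 0 < n) :
    Admissible (sprod (TW n) B) ∧
    inductance (sprod (TW n) B) = 1 - inductance ((A ++ [(n : ℤ) + 1]).reverse) := by
  obtain ⟨m, rfl⟩ : ∃ m, n = m + 1 := ⟨n - 1, by omega⟩
  obtain ⟨hBne, hB2⟩ := hB
  rcases B with _ | ⟨b, B'⟩
  · exact absurd rfl hBne
  have hb : 2 ≤ b := hB2 b (by simp)
  have hsp : sprod (TW (m + 1)) (b :: B') = TW m ++ (b + 1) :: B' := by
    unfold sprod
    have h1 : TW (m + 1) = TW m ++ [2] := by simp [TW, List.replicate_succ']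
    have h2 : (TW m ++ [2]).getLast! = 2 :=
      List.getLast!_of_getLast? (by simp)
    rw [h1, List.dropLast_concat, h2]
    have h3 : (b :: B').head! = b := rfl
    rw [h3, List.tail_cons, show (2 : ℤ) + b - 1 = b + 1 by ring]
  constructor
  · rw [hsp]
    refine ⟨by simp, fun x hx => ?_⟩
    rw [List.mem_append] at hx
    rcases hx with h | h
    · have := List.eq_of_mem_replicate (show x ∈ List.replicate m 2 from h)
      omega
    · rcases List.mem_cons.mp h with rfl | h
      · omega
      · exact hB2 x (by simp [h])
  · -- arithmetic part
    obtain ⟨hD1, hD2⟩ := disc_TW_append b B' m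
    rw [hsp]
    have hc : ((m + 1 : ℕ) : ℤ) + 1 = (m : ℤ) + 2 := by push_cast; ring
    rw [hc]
    have hAne := hA.1
    have hAr : Admissible A.reverse :=
      ⟨by simp [hAne], fun x hx => hA.2 x (by simpa using hx)⟩
    have hconc : disc (A ++ [(m : ℤ) + 2]) = ((m : ℤ) + 2) * disc A - disc A.dropLast :=
      disc_concat A hAne _
    have hApos := disc_tail_lt A.reverse hAr
    rw [List.tail_reverse, disc_reverse, disc_reverse] at hApos
    have hBpos := disc_tail_lt (b :: B') ⟨by simp, hB2⟩
    rw [List.tail_cons] at hBpos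
    unfold inductance at hAB ⊢
    rw [List.tail_cons, List.tail_reverse, disc_reverse, disc_reverse] at hAB
    rw [hD1, hD2, List.tail_reverse, List.dropLast_concat, disc_reverse, disc_reverse,
      hconc]
    have hp1 : (1:ℚ) ≤ (disc A.dropLast : ℚ) := by exact_mod_cast hApos.1
    have hpq : (disc A.dropLast : ℚ) < (disc A : ℚ) := by exact_mod_cast hApos.2
    have hb1 : (1:ℚ) ≤ (disc B' : ℚ) := by exact_mod_cast hBpos.1
    have hbb : (disc B' : ℚ) < (disc (b :: B') : ℚ) := by exact_mod_cast hBpos.2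
    have hβ0 : (disc (b :: B') : ℚ) ≠ 0 := by linarith
    have hq0 : (disc A : ℚ) ≠ 0 := by linarith
    have hm : (0:ℚ) ≤ (m:ℚ) := Nat.cast_nonneg m
    have hden1 : ((m : ℚ) + 1) * (disc (b :: B') : ℚ) + (disc B' : ℚ) ≠ 0 := by nlinarith
    have hden2 : ((m : ℚ) + 2) * (disc A : ℚ) - (disc A.dropLast : ℚ) ≠ 0 := by nlinarith
    have hkey : (disc B' : ℚ) * (disc A : ℚ) =
        ((disc A : ℚ) - (disc A.dropLast : ℚ)) * (disc (b :: B') : ℚ) := by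
      field_simp at hAB
      linear_combination hAB
    push_cast
    rw [div_eq_iff hden1, one_sub_div hden2, div_mul_eq_mul_div, eq_div_iff hden2]
    linear_combination hkey
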